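/- For every optimiser a and every index i ∈ {1, …, n}, there is exactly one needle-in-a-haystack function f with M_ptm(T^y(a,f)) = i; equivalently, under the uniform NIAH distribution the optimisation time of a equals i with probability exactly 1/n for each i. -/

import Mathlib

namespace NFL

/-- A (deterministic) optimiser on search space `Fin n` and range `Y`:
it assigns to every trace (list of pairs with pairwise distinct first
components) of length `< n` a next, unvisited search point. -/
structure Optimiser (n : ℕ) (Y : Type*) where
  next : List (Fin n × Y) → Fin n
  valid : ∀ T : List (Fin n × Y), T.length < n → (T.map Prod.fst).Nodup →
    next T ∉ T.map Prod.fst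

variable {n : ℕ} {Y : Type*}

/-- The trace generated after `k` steps by running optimiser `a`
on target function `f`, starting from the empty trace. -/
def runFrom (a : Optimiser n Y) (f : Fin n → Y) : ℕ → List (Fin n × Y)
  | 0 => []
  | k + 1 =>
      runFrom a f k ++ [(a.next (runFrom a f k), f (a.next (runFrom a f k)))]

/-- The result vector `T^y(a,f)`: its `i`-th entry (0-indexed) is the value
observed at step `i+1`, i.e. `f` applied to the point probed after `i` steps. -/
def resVec (a : Optimiser n Y) (f : Fin n → Y) (i : Fin n) : Y :=
  f (a.next (runFrom a f (i : ℕ)))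

/-- A problem distribution: a probability distribution on `Y^X`. -/
def IsProbDist [Fintype Y] (P : (Fin n → Y) → ℝ) : Prop :=
  (∀ f, 0 ≤ P f) ∧ ∑ f, P f = 1

/-- `P_a(R)`: the probability that optimiser `a` produces result vector `R`. -/
def resProb [Fintype Y] [DecidableEq Y] (P : (Fin n → Y) → ℝ)
    (a : Optimiser n Y) (R : Fin n → Y) : ℝ :=
  ∑ f ∈ Finset.univ.filter (fun f => resVec a f = R), P f

/-- Expected performance `M^P(a)` of optimiser `a` under distribution `P`
and performance measure `M`. -/
def perf [Fintype Y] (P : (Fin n → Y) → ℝ) (M : (Fin n → Y) → ℝ)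
    (a : Optimiser n Y) : ℝ :=
  ∑ f, P f * M (resVec a f)

/-- NFL holds for `P`: all optimisers have the same expected performance
under every (nonnegative) performance measure. -/
def NFLholds [Fintype Y] (P : (Fin n → Y) → ℝ) : Prop :=
  ∀ M : (Fin n → Y) → ℝ, (∀ R, 0 ≤ M R) →
    ∀ a b : Optimiser n Y, perf P M a = perf P M b

/-- The histogram of `f`: `h_f(y) = |f⁻¹(y)|`. -/
def histogram [DecidableEq Y] (f : Fin n → Y) (y : Y) : ℕ :=
  (Finset.univ.filter fun x => f x = y).card

/-- `P` is block uniform: functions with equal histograms get equal probability. -/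
def BlockUniform [DecidableEq Y] (P : (Fin n → Y) → ℝ) : Prop :=
  ∀ f g : Fin n → Y, histogram f = histogram g → P f = P g

/-- `F` is closed under permutation: `f ∈ F` implies `σf ∈ F`,
where `(σf)(x) = f(σ⁻¹(x))`. -/
def Cup [Fintype Y] [DecidableEq Y] (F : Finset (Fin n → Y)) : Prop :=
  ∀ f ∈ F, ∀ σ : Equiv.Perm (Fin n), (f ∘ σ.symm) ∈ F

/-- The uniform distribution on a class `F`. -/
noncomputable def uniformOn [Fintype Y] [DecidableEq Y] (F : Finset (Fin n → Y))
    (f : Fin n → Y) : ℝ :=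
  if f ∈ F then 1 / F.card else 0

/-- An optimiser is non-adaptive if it probes the points of `X` in a fixed
order, regardless of the observed values. -/
def NonAdaptive (a : Optimiser n Y) : Prop :=
  ∃ ord : Fin n → Fin n,
    ∀ (f : Fin n → Y) (i : Fin n), a.next (runFrom a f (i : ℕ)) = ord i

/-- Optimisation time `M_ptm(R)`: the least index `i` (counting from 1) with
`R[i] = yMax`, with the convention `M_ptm(R) = n` if no such index exists. -/
def mptm [DecidableEq Y] (yMax : Y) (R : Fin n → Y) : ℕ :=
  if h : ∃ i, R i = yMax then
    ((Finset.univ.filter fun i => R i = yMax).min'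
      ⟨h.choose, Finset.mem_filter.mpr ⟨Finset.mem_univ _, h.choose_spec⟩⟩).val + 1
  else n

section Aux

variable {n : ℕ}

lemma runFrom_length (a : Optimiser n Bool) (f : Fin n → Bool) (k : ℕ) :
    (runFrom a f k).length = k := by
  induction k with
  | zero => rfl
  | succ k ih => simp [runFrom, ih]

lemma runFrom_map_fst (a : Optimiser n Bool) (f : Fin n → Bool) (k : ℕ) :
    (runFrom a f k).map Prod.fst
      = (List.range k).map (fun j => a.next (runFrom a f j)) := by
  induction k with
  | zero => rfl
  | succ k ih =>
    rw [runFrom, List.map_append, ih, List.range_succ, List.map_append]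
    simp

lemma runFrom_nodup (a : Optimiser n Bool) (f : Fin n → Bool) :
    ∀ k, k ≤ n → ((runFrom a f k).map Prod.fst).Nodup := by
  intro k
  induction k with
  | zero => intro _; simp [runFrom]
  | succ k ih =>
    intro hk
    have hnd := ih (Nat.le_of_succ_le hk)
    have hlt : (runFrom a f k).length < n := by rw [runFrom_length]; omega
    have hv := a.valid _ hlt hnd
    rw [runFrom, List.map_append]
    simp [List.nodup_append, hnd, hv]
    intro x hx hxe
    subst hxe
    apply hv
    rcases hx with hx | hx
    · exact List.mem_map.mpr ⟨_, hx, rfl⟩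
    · exact List.mem_map.mpr ⟨_, hx, rfl⟩

lemma probe_ne (a : Optimiser n Bool) (f : Fin n → Bool) {j k : ℕ}
    (hjk : j < k) (hk : k < n) :
    a.next (runFrom a f j) ≠ a.next (runFrom a f k) := by
  intro h
  have hnd := runFrom_nodup a f (k + 1) hk
  rw [runFrom_map_fst] at hnd
  have := List.inj_on_of_nodup_map hnd (x := j) (y := k)
    (by simp only [List.mem_range]; omega) (by simp only [List.mem_range]; omega) h
  omega

/-- Agreement: if `f` is false on all points probed (by the all-false run)
in the first `k` steps, the traces coincide. -/
lemma runFrom_eq_of_false (a : Optimiser n Bool) (f : Fin n → Bool) (k : ℕ)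
    (h : ∀ j < k, f (a.next (runFrom a (fun _ => false) j)) = false) :
    runFrom a f k = runFrom a (fun _ => false) k := by
  induction k with
  | zero => rfl
  | succ k ih =>
    have ih' := ih (fun j hj => h j (Nat.lt_succ_of_lt hj))
    rw [runFrom, runFrom, ih', h k (Nat.lt_succ_self k)]

/-- For a NIAH function with needle at the `k`-th probe of the all-false run,
the result vector is true exactly at position `k`. -/
lemma niah_resVec (a : Optimiser n Bool) (f : Fin n → Bool) (k : Fin n)
    (hf : ∀ x, f x = true ↔ x = a.next (runFrom a (fun _ => false) (k : ℕ)))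
    (j : Fin n) : resVec a f j = true ↔ j = k := by
  have hfF : ∀ x, x ≠ a.next (runFrom a (fun _ => false) (k : ℕ)) → f x = false := by
    intro x hx
    cases hb : f x
    · rfl
    · exact absurd ((hf x).mp hb) hx
  have hagree : ∀ m : ℕ, m ≤ (k : ℕ) → runFrom a f m = runFrom a (fun _ => false) m := by
    intro m hm
    apply runFrom_eq_of_false
    intro j hj
    exact hfF _ (probe_ne a (fun _ => false) (by omega) k.isLt)
  rcases lt_trichotomy (j : ℕ) (k : ℕ) with hlt | heq | hgt
  · constructor
    · intro ht
      exfalso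
      rw [resVec, hagree (j : ℕ) (le_of_lt hlt)] at ht
      have := hfF _ (probe_ne a (fun _ => false) hlt k.isLt)
      rw [this] at ht
      exact Bool.false_ne_true ht
    · intro hjk; exact absurd (congrArg (Fin.val) hjk) (by omega)
  · have hj : j = k := Fin.ext heq
    subst hj
    simp only [eq_self_iff_true, iff_true]
    rw [resVec, hagree (j : ℕ) le_rfl]
    exact (hf _).mpr rfl
  · constructor
    · intro ht
      exfalso
      -- the needle was already probed at step k < j, so the probe at step j differs
      have hkey : a.next (runFrom a f (j : ℕ))
          ≠ a.next (runFrom a (fun _ => false) (k : ℕ)) := by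
        have h1 : a.next (runFrom a f (k : ℕ))
            = a.next (runFrom a (fun _ => false) (k : ℕ)) := by
          rw [hagree (k : ℕ) le_rfl]
        intro hEq
        rw [← h1] at hEq
        exact probe_ne a f hgt j.isLt hEq.symm
      have := hfF _ hkey
      rw [resVec, this] at ht
      exact Bool.false_ne_true ht
    · intro hjk; exact absurd (congrArg (Fin.val) hjk) (by omega)

lemma mptm_eq_of_unique (R : Fin n → Bool) (k : Fin n)
    (hR : ∀ j, R j = true ↔ j = k) : mptm true R = (k : ℕ) + 1 := by
  have hfil : (Finset.univ.filter fun j => R j = true) = {k} := by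
    ext j
    simp [hR j]
  have hex : ∃ j, R j = true := ⟨k, (hR k).mpr rfl⟩
  rw [mptm, dif_pos hex]
  congr 1
  have : (Finset.univ.filter fun j => R j = true).min'
      ⟨hex.choose, Finset.mem_filter.mpr ⟨Finset.mem_univ _, hex.choose_spec⟩⟩ = k := by
    simp [hfil]
  rw [this]

end Aux

theorem niah_unique_optimisation_time {n : ℕ} (hn : 1 ≤ n)
    (a : Optimiser n Bool) (i : ℕ) (hi1 : 1 ≤ i) (hin : i ≤ n) :
    ∃! f : Fin n → Bool,
      (Finset.univ.filter fun x => f x = true).card = 1 ∧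
        mptm true (resVec a f) = i := by
  set P : Fin n → Fin n := fun k => a.next (runFrom a (fun _ => false) (k : ℕ)) with hP
  have hPinj : Function.Injective P := by
    intro j k hjk
    by_contra hne
    rcases lt_or_gt_of_ne (fun h : (j : ℕ) = (k : ℕ) => hne (Fin.ext h)) with h | h
    · exact probe_ne a (fun _ => false) h k.isLt hjk
    · exact probe_ne a (fun _ => false) h j.isLt hjk.symm
  have hPsurj : Function.Surjective P := Finite.surjective_of_injective hPinj
  set k₀ : Fin n := ⟨i - 1, by omega⟩ with hk₀
  set f₀ : Fin n → Bool := fun x => decide (x = P k₀) with hf₀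
  have hf₀spec : ∀ x, f₀ x = true ↔ x = P k₀ := by
    intro x; simp [hf₀]
  have hres₀ : ∀ j, resVec a f₀ j = true ↔ j = k₀ := niah_resVec a f₀ k₀ hf₀spec
  have hcard₀ : (Finset.univ.filter fun x => f₀ x = true).card = 1 := by
    have : (Finset.univ.filter fun x => f₀ x = true) = {P k₀} := by
      ext x; simp [hf₀spec x]
    rw [this, Finset.card_singleton]
  have hmptm₀ : mptm true (resVec a f₀) = i := by
    rw [mptm_eq_of_unique _ k₀ hres₀]
    simp [hk₀]; omega
  refine ⟨f₀, ⟨hcard₀, hmptm₀⟩, ?_⟩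
  rintro f ⟨hcard, hmptm⟩
  obtain ⟨y, hy⟩ := Finset.card_eq_one.mp hcard
  have hfspec : ∀ x, f x = true ↔ x = y := by
    intro x
    constructor
    · intro hx
      have : x ∈ (Finset.univ.filter fun x => f x = true) := by
        simp [hx]
      rw [hy] at this; simpa using this
    · intro hxy
      have : y ∈ (Finset.univ.filter fun x => f x = true) := by
        rw [hy]; exact Finset.mem_singleton_self y
      rw [hxy]
      simpa using this
  obtain ⟨k, rfl⟩ := hPsurj y
  have hres : ∀ j, resVec a f j = true ↔ j = k := niah_resVec a f k hfspec
  have : mptm true (resVec a f) = (k : ℕ) + 1 := mptm_eq_of_unique _ k hres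
  have hk : k = k₀ := by
    apply Fin.ext
    simp only [hk₀]
    omega
  subst hk
  funext x
  cases hb : f x
  · cases hb₀ : f₀ x
    · rfl
    · exact absurd ((hfspec x).mpr ((hf₀spec x).mp hb₀)) (by simp [hb])
  · rw [(hf₀spec x).mpr ((hfspec x).mp hb)]

end NFL
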